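/- Let H be a one-dimensional k-local Hamiltonian with unit-norm terms on the n-site chain, let O be an operator supported on an adjacent interval of at most k sites, and let m ≥ 2 be an integer. Then ‖ad_H^m(O)‖ ≤ ‖O‖ · (6·k·m / ((8/5)·log m))^m. (This is inequality (16) of the paper with the constant γ ≃ 1.6026 replaced by the smaller value 8/5.) -/

import Mathlib

set_option maxHeartbeats 1000000


open scoped Matrix.Norms.L2Operator

/-- Operators on the `n`-site chain with local dimension `d`: matrices indexed by
configurations `Fin n → Fin d`, acting on `(ℂ^d)^{⊗n}`, with the ℓ²→ℓ² operator norm. -/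
abbrev ChainOp (n d : ℕ) := Matrix (Fin n → Fin d) (Fin n → Fin d) ℂ

/-- `M` is supported on the set of sites `L`: entries vanish whenever the two configurations
differ at a site outside `L`, and entries depend only on the restrictions of the
configurations to `L`. -/
def SupportedOn {n d : ℕ} (M : ChainOp n d) (L : Finset (Fin n)) : Prop :=
  (∀ x y : Fin n → Fin d, (∃ i ∉ L, x i ≠ y i) → M x y = 0) ∧
  (∀ x y x' y' : Fin n → Fin d,
      (∀ i ∈ L, x i = x' i) → (∀ i ∈ L, y i = y' i) →
      (∀ i ∉ L, x i = y i) → (∀ i ∉ L, x' i = y' i) → M x y = M x' y')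

/-- The interval of sites `{i : a ≤ i ≤ b}` (automatically intersected with `{0,…,n-1}`). -/
def chainInterval (n : ℕ) (a b : ℕ) : Finset (Fin n) :=
  Finset.univ.filter fun i : Fin n => a ≤ (i : ℕ) ∧ (i : ℕ) ≤ b

/-- `H` is a one-dimensional `k`-local Hamiltonian with unit-norm terms:
`H = Σ_j h_j` where `h_j` is supported on `{j, …, j+k-1} ∩ {0,…,n-1}` and `‖h_j‖ ≤ 1`. -/
def IsLocalHam (n d k : ℕ) (H : ChainOp n d) : Prop :=
  ∃ h : Fin n → ChainOp n d,
    H = ∑ j, h j ∧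
    ∀ j : Fin n, SupportedOn (h j) (chainInterval n j ((j : ℕ) + k - 1)) ∧ ‖h j‖ ≤ 1


/-- The adjoint action `ad_H(O) := H·O − O·H`. -/
noncomputable def ad {n d : ℕ} (H O : ChainOp n d) : ChainOp n d := H * O - O * H









variable {n d : ℕ}

lemma swap_ne {a b c : Fin d} (h : c ≠ a) : Equiv.swap a b c ≠ b := fun he =>
  h ((Equiv.swap a b).injective (he.trans (Equiv.swap_apply_left a b).symm))

lemma supportedOn_mono {M : ChainOp n d} {L L' : Finset (Fin n)}
    (hM : SupportedOn M L) (hLL : L ⊆ L') : SupportedOn M L' := by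
  obtain ⟨h1, h2⟩ := hM
  constructor
  · rintro x y ⟨i, hi, hxy⟩
    exact h1 x y ⟨i, fun hiL => hi (hLL hiL), hxy⟩
  · intro x y x' y' hx hy hxy hxy'
    by_cases hcase : ∀ i, i ∉ L → x i = y i
    · have hcase' : ∀ i, i ∉ L → x' i = y' i := by
        intro i hi
        by_cases hiL' : i ∈ L'
        · rw [← hx i hiL', ← hy i hiL']; exact hcase i hi
        · exact hxy' i hiL'
      exact h2 x y x' y' (fun i hi => hx i (hLL hi)) (fun i hi => hy i (hLL hi))
        (fun i hi => hcase i hi) (fun i hi => hcase' i hi)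
    · push_neg at hcase
      obtain ⟨i, hi, hne⟩ := hcase
      have hiL' : i ∈ L' := by
        by_contra hiL'
        exact hne (hxy i hiL')
      rw [h1 x y ⟨i, hi, hne⟩, h1 x' y' ⟨i, hi, by rw [← hx i hiL', ← hy i hiL']; exact hne⟩]

lemma SupportedOn.sub {M N : ChainOp n d} {L : Finset (Fin n)}
    (hM : SupportedOn M L) (hN : SupportedOn N L) : SupportedOn (M - N) L := by
  constructor
  · intro x y h
    simp only [Matrix.sub_apply, hM.1 x y h, hN.1 x y h, sub_zero]
  · intro x y x' y' hx hy hxy hxy'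
    simp only [Matrix.sub_apply, hM.2 x y x' y' hx hy hxy hxy', hN.2 x y x' y' hx hy hxy hxy']

lemma SupportedOn.mul {A B : ChainOp n d} {La Lb : Finset (Fin n)}
    (hA : SupportedOn A La) (hB : SupportedOn B Lb) :
    SupportedOn (A * B) (La ∪ Lb) := by
  classical
  constructor
  · rintro x y ⟨i, hi, hxy⟩
    rw [Finset.mem_union] at hi
    push_neg at hi
    rw [Matrix.mul_apply]
    apply Finset.sum_eq_zero
    intro z _
    by_cases hz : x i = z i
    · rw [hB.1 z y ⟨i, hi.2, hz ▸ hxy⟩, mul_zero]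
    · rw [hA.1 x z ⟨i, hi.1, hz⟩, zero_mul]
  · intro x y x' y' hx hy hxy hxy'
    set zb : (Fin n → Fin d) → (Fin n → Fin d) := fun w i => if i ∈ La then w i else x i with hzbdef
    -- base from (x,y) and (x',y')
    let c : Fin n → Fin d := fun i => if i ∈ La then y i else x i
    let c' : Fin n → Fin d := fun i => if i ∈ La then y' i else x' i
    set T : (Fin n → Fin d) ≃ (Fin n → Fin d) :=
      Equiv.piCongrRight (fun i => if i ∈ La ∩ Lb then Equiv.refl (Fin d) else Equiv.swap (c i) (c' i)) with hTdef
    have hTz : ∀ (z : Fin n → Fin d) (i : Fin n),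
        T z i = if i ∈ La ∩ Lb then z i else Equiv.swap (c i) (c' i) (z i) := by
      intro z i
      simp only [hTdef, Equiv.piCongrRight_apply, Pi.map_apply]
      split <;> rfl
    rw [Matrix.mul_apply, Matrix.mul_apply, ← Equiv.sum_comp T (fun z => A x' z * B z y')]
    apply Finset.sum_congr rfl
    intro z _
    show A x z * B z y = A x' (T z) * B (T z) y'
    by_cases hca : ∀ i, i ∉ La → x i = z i
    · by_cases hcb : ∀ i, i ∉ Lb → z i = y i
      · -- main case
        have hzoff : ∀ i, i ∉ La ∩ Lb → z i = c i := by
          intro i hi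
          by_cases hiA : i ∈ La
          · have hiB : i ∉ Lb := fun h => hi (Finset.mem_inter.2 ⟨hiA, h⟩)
            simp only [c, if_pos hiA]
            exact hcb i hiB
          · simp only [c, if_neg hiA]
            exact (hca i hiA).symm
        have hT1 : ∀ i, i ∈ La ∩ Lb → T z i = z i := by
          intro i hi; rw [hTz, if_pos hi]
        have hT2 : ∀ i, i ∉ La ∩ Lb → T z i = c' i := by
          intro i hi; rw [hTz, if_neg hi, hzoff i hi, Equiv.swap_apply_left]
        have eA : A x z = A x' (T z) := by
          apply hA.2
          · intro i hi; exact hx i (Finset.mem_union_left _ hi)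
          · intro i hi
            by_cases hiB : i ∈ Lb
            · rw [hT1 i (Finset.mem_inter.2 ⟨hi, hiB⟩)]
            · have hni : i ∉ La ∩ Lb := fun h => hiB (Finset.mem_inter.1 h).2
              rw [hT2 i hni, hzoff i hni]
              simp only [c, c', if_pos hi]
              exact hy i (Finset.mem_union_left _ hi)
          · intro i hi; exact hca i hi
          · intro i hi
            have hni : i ∉ La ∩ Lb := fun h => hi (Finset.mem_inter.1 h).1
            rw [hT2 i hni]
            simp only [c', if_neg hi]
        have eB : B z y = B (T z) y' := by
          apply hB.2
          · intro i hi
            by_cases hiA : i ∈ La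
            · rw [hT1 i (Finset.mem_inter.2 ⟨hiA, hi⟩)]
            · have hni : i ∉ La ∩ Lb := fun h => hiA (Finset.mem_inter.1 h).1
              rw [hT2 i hni, hzoff i hni]
              simp only [c, c', if_neg hiA]
              exact hx i (Finset.mem_union_right _ hi)
          · intro i hi; exact hy i (Finset.mem_union_right _ hi)
          · intro i hi; exact hcb i hi
          · intro i hi
            have hni : i ∉ La ∩ Lb := fun h => hi (Finset.mem_inter.1 h).2
            rw [hT2 i hni]
            by_cases hiA : i ∈ La
            · simp only [c', if_pos hiA]
            · simp only [c', if_neg hiA]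
              exact hxy' i (by rw [Finset.mem_union]; tauto)
        rw [← eA, ← eB]
      · push_neg at hcb
        obtain ⟨i, hiB, hne⟩ := hcb
        have hni : i ∉ La ∩ Lb := fun h => hiB (Finset.mem_inter.1 h).2
        have hci : c i = y i := by
          by_cases hiA : i ∈ La
          · simp only [c, if_pos hiA]
          · simp only [c, if_neg hiA]
            exact hxy i (by rw [Finset.mem_union]; tauto)
        have hci' : c' i = y' i := by
          by_cases hiA : i ∈ La
          · simp only [c', if_pos hiA]
          · simp only [c', if_neg hiA]
            exact hxy' i (by rw [Finset.mem_union]; tauto)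
        have : T z i ≠ y' i := by
          rw [hTz, if_neg hni, hci, hci']
          exact swap_ne hne
        rw [hB.1 z y ⟨i, hiB, hne⟩, hB.1 (T z) y' ⟨i, hiB, this⟩, mul_zero, mul_zero]
    · push_neg at hca
      obtain ⟨i, hiA, hne⟩ := hca
      have hni : i ∉ La ∩ Lb := fun h => hiA (Finset.mem_inter.1 h).1
      have hci : c i = x i := by simp only [c, if_neg hiA]
      have hci' : c' i = x' i := by simp only [c', if_neg hiA]
      have : x' i ≠ T z i := by
        rw [hTz, if_neg hni, hci, hci']
        exact fun h => swap_ne (fun hzx => hne hzx.symm) h.symm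
      rw [hA.1 x z ⟨i, hiA, hne⟩, hA.1 x' (T z) ⟨i, hiA, this⟩, zero_mul, zero_mul]

lemma mul_comm_of_disjoint {A B : ChainOp n d} {La Lb : Finset (Fin n)}
    (hA : SupportedOn A La) (hB : SupportedOn B Lb) (hdis : Disjoint La Lb) :
    A * B = B * A := by
  classical
  have hdAB : ∀ i, i ∈ La → i ∉ Lb := fun i hi => Finset.disjoint_left.1 hdis hi
  have hdBA : ∀ i, i ∈ Lb → i ∉ La := fun i hi => Finset.disjoint_right.1 hdis hi
  ext x y
  set V : (Fin n → Fin d) ≃ (Fin n → Fin d) :=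
    Equiv.piCongrRight (fun i =>
      if i ∈ La then Equiv.swap (y i) (x i)
      else if i ∈ Lb then Equiv.swap (x i) (y i) else Equiv.refl (Fin d)) with hVdef
  have hVz : ∀ (z : Fin n → Fin d) (i : Fin n),
      V z i = if i ∈ La then Equiv.swap (y i) (x i) (z i)
        else if i ∈ Lb then Equiv.swap (x i) (y i) (z i) else z i := by
    intro z i
    simp only [hVdef, Equiv.piCongrRight_apply, Pi.map_apply]
    split
    · rfl
    · split <;> rfl
  rw [Matrix.mul_apply, Matrix.mul_apply, ← Equiv.sum_comp V (fun z => B x z * A z y)]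
  apply Finset.sum_congr rfl
  intro z _
  show A x z * B z y = B x (V z) * A (V z) y
  by_cases hca : ∀ i, i ∉ La → x i = z i
  · by_cases hcb : ∀ i, i ∉ Lb → z i = y i
    · -- main case : both sides nonzero pattern
      have hVA : ∀ i, i ∈ La → V z i = x i := by
        intro i hi
        rw [hVz, if_pos hi, hcb i (hdAB i hi), Equiv.swap_apply_left]
      have hVB : ∀ i, i ∈ Lb → V z i = y i := by
        intro i hi
        rw [hVz, if_neg (hdBA i hi), if_pos hi, ← hca i (hdBA i hi), Equiv.swap_apply_left]
      have hVout : ∀ i, i ∉ La → i ∉ Lb → V z i = z i := by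
        intro i hia hib
        rw [hVz, if_neg hia, if_neg hib]
      have eA : A x z = A (V z) y := by
        apply hA.2
        · intro i hi; exact (hVA i hi).symm
        · intro i hi; exact hcb i (hdAB i hi)
        · intro i hi; exact hca i hi
        · intro i hi
          by_cases hib : i ∈ Lb
          · exact hVB i hib
          · rw [hVout i hi hib, hcb i hib]
      have eB : B z y = B x (V z) := by
        apply hB.2
        · intro i hi; exact (hca i (hdBA i hi)).symm
        · intro i hi; exact (hVB i hi).symm
        · intro i hi; exact hcb i hi
        · intro i hi
          by_cases hia : i ∈ La
          · exact (hVA i hia).symm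
          · rw [hVout i hia hi]; exact hca i hia
      rw [eA, eB, mul_comm]
    · push_neg at hcb
      obtain ⟨i, hib, hne⟩ := hcb
      rw [hB.1 z y ⟨i, hib, hne⟩, mul_zero]
      by_cases hia : i ∈ La
      · have : x i ≠ V z i := by
          rw [hVz, if_pos hia]
          exact fun h => swap_ne hne h.symm
        rw [hB.1 x (V z) ⟨i, hib, this⟩, zero_mul]
      · have : V z i ≠ y i := by
          rw [hVz, if_neg hia, if_neg hib]
          exact hne
        rw [hA.1 (V z) y ⟨i, hia, this⟩, mul_zero]
  · push_neg at hca
    obtain ⟨i, hia, hne⟩ := hca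
    rw [hA.1 x z ⟨i, hia, hne⟩, zero_mul]
    by_cases hib : i ∈ Lb
    · have : V z i ≠ y i := by
        rw [hVz, if_neg hia, if_pos hib]
        exact swap_ne (fun h => hne h.symm)
      rw [hA.1 (V z) y ⟨i, hia, this⟩, mul_zero]
    · have : x i ≠ V z i := by
        rw [hVz, if_neg hia, if_neg hib]
        exact hne
      rw [hB.1 x (V z) ⟨i, hib, this⟩, zero_mul]


lemma mem_chainInterval {a b : ℕ} {i : Fin n} :
    i ∈ chainInterval n a b ↔ a ≤ (i : ℕ) ∧ (i : ℕ) ≤ b := by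
  simp [chainInterval]

lemma chainInterval_subset {a1 b1 a2 b2 : ℕ} (h1 : a2 ≤ a1) (h2 : b1 ≤ b2) :
    chainInterval n a1 b1 ⊆ chainInterval n a2 b2 := by
  intro i hi
  rw [mem_chainInterval] at *
  omega

lemma supportedOn_ad {A B : ChainOp n d} {La Lb L : Finset (Fin n)}
    (hA : SupportedOn A La) (hB : SupportedOn B Lb) (h1 : La ⊆ L) (h2 : Lb ⊆ L) :
    SupportedOn (ad A B) L :=
  (supportedOn_mono (hA.mul hB) (Finset.union_subset h1 h2)).sub
    (supportedOn_mono (hB.mul hA) (Finset.union_subset h2 h1))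

lemma ad_zero (H : ChainOp n d) : ad H 0 = 0 := by simp [ad]

lemma ad_iter_zero (H : ChainOp n d) (i : ℕ) : (ad H)^[i] 0 = 0 :=
  Function.iterate_fixed (ad_zero H) i

lemma ad_sum (H : ChainOp n d) {ι : Type*} (s : Finset ι) (f : ι → ChainOp n d) :
    ad H (∑ j ∈ s, f j) = ∑ j ∈ s, ad H (f j) := by
  simp only [ad, Finset.mul_sum, Finset.sum_mul, ← Finset.sum_sub_distrib]

lemma ad_iter_sum (H : ChainOp n d) (i : ℕ) {ι : Type*} (s : Finset ι) (f : ι → ChainOp n d) :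
    (ad H)^[i] (∑ j ∈ s, f j) = ∑ j ∈ s, (ad H)^[i] (f j) := by
  induction i generalizing f with
  | zero => simp
  | succ i ih =>
    rw [Function.iterate_succ_apply, ad_sum]
    exact ih (fun j => ad H (f j))

lemma norm_ad_le (A B : ChainOp n d) : ‖ad A B‖ ≤ 2 * ‖A‖ * ‖B‖ := by
  calc ‖A * B - B * A‖ ≤ ‖A * B‖ + ‖B * A‖ := norm_sub_le _ _
    _ ≤ ‖A‖ * ‖B‖ + ‖B‖ * ‖A‖ := add_le_add (norm_mul_le _ _) (norm_mul_le _ _)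
    _ = 2 * ‖A‖ * ‖B‖ := by ring

def QN (i s : ℕ) : ℕ := ∑ r ∈ Finset.range (i+1), i.choose r * 2^r * (s + r)^(i - r)

lemma QN_zero (s : ℕ) : QN 0 s = 1 := by simp [QN]

lemma QN_rec (i s : ℕ) : s * QN i s + 2 * QN i (s+1) ≤ QN (i+1) s := by
  have expand : QN (i+1) s =
      (∑ r ∈ Finset.range (i+1), (i.choose r + i.choose (r+1)) * 2^(r+1) * (s + (r+1))^(i - r))
        + s^(i+1) := by
    rw [QN, Finset.sum_range_succ']
    congr 1
    · apply Finset.sum_congr rfl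
      intro r hr
      rw [Nat.choose_succ_succ]
      have h4 : i + 1 - (r+1) = i - r := by omega
      rw [h4]
    · simp
  have first : (∑ r ∈ Finset.range (i+1), i.choose r * 2^(r+1) * (s + (r+1))^(i - r))
      = 2 * QN i (s+1) := by
    rw [QN, Finset.mul_sum]
    apply Finset.sum_congr rfl
    intro r hr
    ring_nf
  have FF : ∀ r, i.choose r * 2^r * (s + r)^(i + 1 - r) = i.choose r * 2^r * (s + r)^(i + 1 - r) := fun _ => rfl
  have second : (∑ r ∈ Finset.range (i+1), i.choose (r+1) * 2^(r+1) * (s + (r+1))^(i - r))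
      + s^(i+1)
      = ∑ r ∈ Finset.range (i+1), i.choose r * 2^r * (s + r)^(i + 1 - r) := by
    have h1 : ∑ r ∈ Finset.range (i+2), i.choose r * 2^r * (s + r)^(i + 1 - r)
        = (∑ r ∈ Finset.range (i+1), i.choose (r+1) * 2^(r+1) * (s + (r+1))^(i + 1 - (r+1)))
          + i.choose 0 * 2^0 * (s+0)^(i+1-0) := Finset.sum_range_succ' _ _
    have h2 : ∑ r ∈ Finset.range (i+2), i.choose r * 2^r * (s + r)^(i + 1 - r)
        = (∑ r ∈ Finset.range (i+1), i.choose r * 2^r * (s + r)^(i + 1 - r))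
          + i.choose (i+1) * 2^(i+1) * (s+(i+1))^(i+1-(i+1)) := Finset.sum_range_succ _ _
    rw [Nat.choose_succ_self] at h2
    simp only [Nat.choose_zero_right, pow_zero, one_mul, Nat.add_zero, Nat.sub_zero, zero_mul, add_zero] at h1 h2
    have h3 : ∀ r ∈ Finset.range (i+1), i.choose (r+1) * 2^(r+1) * (s + (r+1))^(i + 1 - (r+1))
        = i.choose (r+1) * 2^(r+1) * (s + (r+1))^(i - r) := by
      intro r hr
      have h4 : i + 1 - (r+1) = i - r := by omega
      rw [h4]
    rw [Finset.sum_congr rfl h3] at h1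
    omega
  have third : s * QN i s ≤ ∑ r ∈ Finset.range (i+1), i.choose r * 2^r * (s + r)^(i + 1 - r) := by
    rw [QN, Finset.mul_sum]
    apply Finset.sum_le_sum
    intro r hr
    rw [Finset.mem_range] at hr
    have : i + 1 - r = (i - r) + 1 := by omega
    rw [this, pow_succ]
    calc s * (i.choose r * 2^r * (s + r)^(i-r))
        ≤ (s + r) * (i.choose r * 2^r * (s + r)^(i-r)) := by
          apply Nat.mul_le_mul_right
          omega
      _ = i.choose r * 2^r * ((s + r)^(i-r) * (s+r)) := by ring
  calc s * QN i s + 2 * QN i (s+1)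
      ≤ (∑ r ∈ Finset.range (i+1), i.choose r * 2^r * (s + r)^(i + 1 - r)) + 2 * QN i (s+1) := by
        omega
    _ = QN (i+1) s := by
        rw [expand]
        have dist : ∑ r ∈ Finset.range (i+1), (i.choose r + i.choose (r+1)) * 2^(r+1) * (s + (r+1))^(i - r)
            = (∑ r ∈ Finset.range (i+1), i.choose r * 2^(r+1) * (s + (r+1))^(i - r))
              + ∑ r ∈ Finset.range (i+1), i.choose (r+1) * 2^(r+1) * (s + (r+1))^(i - r) := by
          rw [← Finset.sum_add_distrib]
          apply Finset.sum_congr rfl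
          intro r hr
          ring
        rw [dist, first]
        omega

lemma ad_sum_left (O : ChainOp n d) {ι : Type*} (s : Finset ι) (f : ι → ChainOp n d) :
    ad (∑ j ∈ s, f j) O = ∑ j ∈ s, ad (f j) O := by
  simp only [ad, Finset.mul_sum, Finset.sum_mul, ← Finset.sum_sub_distrib]

lemma key (k : ℕ) (hk : 2 ≤ k) (H : ChainOp n d) (h : Fin n → ChainOp n d)
    (hHsum : H = ∑ j, h j)
    (hh : ∀ j : Fin n, SupportedOn (h j) (chainInterval n j ((j:ℕ) + k - 1)) ∧ ‖h j‖ ≤ 1) :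
    ∀ (i : ℕ) (a' b' s : ℕ) (O' : ChainOp n d), a' ≤ b' → b' + 1 ≤ a' + k * s →
      SupportedOn O' (chainInterval n a' b') →
      ‖(ad H)^[i] O'‖ ≤ ‖O'‖ * (2*(k:ℝ))^i * (QN i s : ℝ) := by
  intro i
  induction i with
  | zero =>
    intro a' b' s O' hab hw hO'
    simp [QN_zero]
  | succ i ih =>
    intro a' b' s O' hab hw hO'
    classical
    have hO'nn : (0:ℝ) ≤ ‖O'‖ := norm_nonneg _
    have hknn : (0:ℝ) ≤ 2*(k:ℝ) := by positivity
    have hXnn : ∀ s' : ℕ, (0:ℝ) ≤ (2*(k:ℝ))^i * (QN i s' : ℝ) := by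
      intro s'; positivity
    -- expansion
    have e0 : ad H O' = ∑ j, ad (h j) O' := by
      conv_lhs => rw [hHsum]
      exact ad_sum_left O' _ h
    have e1 : (ad H)^[i+1] O' = ∑ j, (ad H)^[i] (ad (h j) O') := by
      rw [Function.iterate_succ_apply, e0, ad_iter_sum]
    set g : Fin n → ℝ := fun j => ‖(ad H)^[i] (ad (h j) O')‖ with hg
    have e2 : ‖(ad H)^[i+1] O'‖ ≤ ∑ j, g j := by
      rw [e1]; exact norm_sum_le _ _
    -- predicates
    set PV : Fin n → Prop := fun j => (j:ℕ) ≤ b' ∧ a' < (j:ℕ) + k with hPV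
    set PN : Fin n → Prop := fun j => a' ≤ (j:ℕ) ∧ (j:ℕ) + k ≤ b' + 1 with hPN
    -- norm bound of single commutator
    have hcomm : ∀ j : Fin n, ‖ad (h j) O'‖ ≤ 2 * ‖O'‖ := by
      intro j
      calc ‖ad (h j) O'‖ ≤ 2 * ‖h j‖ * ‖O'‖ := norm_ad_le _ _
        _ ≤ 2 * 1 * ‖O'‖ := by
            have := (hh j).2
            have h2 : (0:ℝ) ≤ ‖h j‖ := norm_nonneg _
            nlinarith
        _ = 2 * ‖O'‖ := by ring
    -- vanishing terms
    have hzero : ∀ j : Fin n, ¬ PV j → g j = 0 := by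
      intro j hj
      simp only [hPV] at hj
      push_neg at hj
      have hdis : Disjoint (chainInterval n j ((j:ℕ)+k-1)) (chainInterval n a' b') := by
        rw [Finset.disjoint_left]
        intro i hi1 hi2
        rw [mem_chainInterval] at hi1 hi2
        by_cases hjb : (j:ℕ) ≤ b'
        · have := hj hjb; omega
        · omega
      have : ad (h j) O' = 0 := by
        rw [ad, mul_comm_of_disjoint (hh j).1 hO' hdis, sub_self]
      rw [hg]
      simp only [this, ad_iter_zero, norm_zero]
    -- N-class bound
    have hNbound : ∀ j : Fin n, PN j → g j ≤ 2 * ‖O'‖ * ((2*(k:ℝ))^i * (QN i s : ℝ)) := by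
      intro j hj
      simp only [hPN] at hj
      have hsub : chainInterval n j ((j:ℕ)+k-1) ⊆ chainInterval n a' b' :=
        chainInterval_subset (by omega) (by omega)
      have hsupp : SupportedOn (ad (h j) O') (chainInterval n a' b') :=
        supportedOn_ad (hh j).1 hO' hsub (Finset.Subset.refl _)
      calc g j ≤ ‖ad (h j) O'‖ * (2*(k:ℝ))^i * (QN i s : ℝ) := ih a' b' s _ hab hw hsupp
        _ ≤ (2 * ‖O'‖) * (2*(k:ℝ))^i * (QN i s : ℝ) := by
            gcongr
            exact hcomm j
        _ = 2 * ‖O'‖ * ((2*(k:ℝ))^i * (QN i s : ℝ)) := by ring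
    -- E-class bound
    have hEbound : ∀ j : Fin n, PV j → ¬ PN j → g j ≤ 2 * ‖O'‖ * ((2*(k:ℝ))^i * (QN i (s+1) : ℝ)) := by
      intro j hjv hjn
      simp only [hPV] at hjv
      simp only [hPN] at hjn
      push_neg at hjn
      set a'' := min a' (j:ℕ) with ha''
      set b'' := max b' ((j:ℕ)+k-1) with hb''
      have hab'' : a'' ≤ b'' := by omega
      have hw'' : b'' + 1 ≤ a'' + k * (s+1) := by
        have hmul : k * (s+1) = k * s + k := by ring
        omega
      have hsub1 : chainInterval n j ((j:ℕ)+k-1) ⊆ chainInterval n a'' b'' :=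
        chainInterval_subset (by omega) (by omega)
      have hsub2 : chainInterval n a' b' ⊆ chainInterval n a'' b'' :=
        chainInterval_subset (by omega) (by omega)
      have hsupp : SupportedOn (ad (h j) O') (chainInterval n a'' b'') :=
        supportedOn_ad (hh j).1 hO' hsub1 hsub2
      calc g j ≤ ‖ad (h j) O'‖ * (2*(k:ℝ))^i * (QN i (s+1) : ℝ) := ih a'' b'' (s+1) _ hab'' hw'' hsupp
        _ ≤ (2 * ‖O'‖) * (2*(k:ℝ))^i * (QN i (s+1) : ℝ) := by
            gcongr
            exact hcomm j
        _ = 2 * ‖O'‖ * ((2*(k:ℝ))^i * (QN i (s+1) : ℝ)) := by ring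
    -- cardinalities
    have hcardN : (Finset.univ.filter (fun j : Fin n => PN j)).card ≤ k * s := by
      have h1 : (Finset.univ.filter (fun j : Fin n => PN j)).card ≤ (Finset.Icc a' b').card := by
        refine Finset.card_le_card_of_injOn Fin.val ?_ ?_
        · intro j hj
          rw [Finset.mem_coe, Finset.mem_filter, hPN] at hj
          rw [Finset.mem_coe, Finset.mem_Icc]
          omega
        · intro j1 _ j2 _ hj
          exact Fin.val_injective hj
      rw [Nat.card_Icc] at h1
      omega
    have hcardE : (Finset.univ.filter (fun j : Fin n => PV j ∧ ¬ PN j)).card ≤ 2 * k := by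
      have hsubE : Finset.univ.filter (fun j : Fin n => PV j ∧ ¬ PN j) ⊆
          (Finset.univ.filter (fun j : Fin n => (j:ℕ) < a' ∧ a' < (j:ℕ) + k)) ∪
          (Finset.univ.filter (fun j : Fin n => (j:ℕ) ≤ b' ∧ b' + 1 < (j:ℕ) + k)) := by
        intro j hj
        rw [Finset.mem_filter, hPV, hPN] at hj
        rw [Finset.mem_union, Finset.mem_filter, Finset.mem_filter]
        have := hj.2
        simp only [Finset.mem_univ, true_and]
        omega
      have hc1 : (Finset.univ.filter (fun j : Fin n => (j:ℕ) < a' ∧ a' < (j:ℕ) + k)).card ≤ k := by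
        have h1 : (Finset.univ.filter (fun j : Fin n => (j:ℕ) < a' ∧ a' < (j:ℕ) + k)).card
            ≤ (Finset.Ico (a' - k) a').card := by
          refine Finset.card_le_card_of_injOn Fin.val ?_ ?_
          · intro j hj
            rw [Finset.mem_coe, Finset.mem_filter] at hj
            rw [Finset.mem_coe, Finset.mem_Ico]
            omega
          · intro j1 _ j2 _ hj
            exact Fin.val_injective hj
        rw [Nat.card_Ico] at h1
        omega
      have hc2 : (Finset.univ.filter (fun j : Fin n => (j:ℕ) ≤ b' ∧ b' + 1 < (j:ℕ) + k)).card ≤ k := by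
        have h1 : (Finset.univ.filter (fun j : Fin n => (j:ℕ) ≤ b' ∧ b' + 1 < (j:ℕ) + k)).card
            ≤ (Finset.Ico (b' + 1 - k) (b'+1)).card := by
          refine Finset.card_le_card_of_injOn Fin.val ?_ ?_
          · intro j hj
            rw [Finset.mem_coe, Finset.mem_filter] at hj
            rw [Finset.mem_coe, Finset.mem_Ico]
            omega
          · intro j1 _ j2 _ hj
            exact Fin.val_injective hj
        rw [Nat.card_Ico] at h1
        omega
      calc (Finset.univ.filter (fun j : Fin n => PV j ∧ ¬ PN j)).card
          ≤ _ := Finset.card_le_card hsubE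
        _ ≤ _ + _ := Finset.card_union_le _ _
        _ ≤ 2 * k := by omega
    -- split the sum
    have hsplit : ∑ j, g j = (∑ j ∈ Finset.univ.filter (fun j : Fin n => PN j), g j)
        + ∑ j ∈ Finset.univ.filter (fun j : Fin n => PV j ∧ ¬ PN j), g j := by
      rw [← Finset.sum_filter_add_sum_filter_not Finset.univ (fun j : Fin n => PN j) g]
      congr 1
      rw [← Finset.sum_filter_add_sum_filter_not (Finset.univ.filter (fun j : Fin n => ¬ PN j)) (fun j : Fin n => PV j) g]
      have hz : ∑ j ∈ (Finset.univ.filter (fun j : Fin n => ¬ PN j)).filter (fun j : Fin n => ¬ PV j), g j = 0 := by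
        apply Finset.sum_eq_zero
        intro j hj
        rw [Finset.mem_filter] at hj
        exact hzero j hj.2
      rw [hz, add_zero, Finset.filter_filter]
      apply Finset.sum_congr _ (fun _ _ => rfl)
      apply Finset.filter_congr
      intro j _
      tauto
    have hsum1 : ∑ j ∈ Finset.univ.filter (fun j : Fin n => PN j), g j
        ≤ (k*s : ℕ) * (2 * ‖O'‖ * ((2*(k:ℝ))^i * (QN i s : ℝ))) := by
      calc ∑ j ∈ Finset.univ.filter (fun j : Fin n => PN j), g j
          ≤ (Finset.univ.filter (fun j : Fin n => PN j)).card •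
              (2 * ‖O'‖ * ((2*(k:ℝ))^i * (QN i s : ℝ))) := by
            apply Finset.sum_le_card_nsmul
            intro j hj
            rw [Finset.mem_filter] at hj
            exact hNbound j hj.2
        _ = ((Finset.univ.filter (fun j : Fin n => PN j)).card : ℝ) *
              (2 * ‖O'‖ * ((2*(k:ℝ))^i * (QN i s : ℝ))) := by
            rw [nsmul_eq_mul]
        _ ≤ (k*s : ℕ) * (2 * ‖O'‖ * ((2*(k:ℝ))^i * (QN i s : ℝ))) := by
            apply mul_le_mul_of_nonneg_right
            · exact_mod_cast hcardN
            · positivity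
    have hsum2 : ∑ j ∈ Finset.univ.filter (fun j : Fin n => PV j ∧ ¬ PN j), g j
        ≤ (2*k : ℕ) * (2 * ‖O'‖ * ((2*(k:ℝ))^i * (QN i (s+1) : ℝ))) := by
      calc ∑ j ∈ Finset.univ.filter (fun j : Fin n => PV j ∧ ¬ PN j), g j
          ≤ (Finset.univ.filter (fun j : Fin n => PV j ∧ ¬ PN j)).card •
              (2 * ‖O'‖ * ((2*(k:ℝ))^i * (QN i (s+1) : ℝ))) := by
            apply Finset.sum_le_card_nsmul
            intro j hj
            rw [Finset.mem_filter] at hj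
            exact hEbound j hj.2.1 hj.2.2
        _ = ((Finset.univ.filter (fun j : Fin n => PV j ∧ ¬ PN j)).card : ℝ) *
              (2 * ‖O'‖ * ((2*(k:ℝ))^i * (QN i (s+1) : ℝ))) := by
            rw [nsmul_eq_mul]
        _ ≤ (2*k : ℕ) * (2 * ‖O'‖ * ((2*(k:ℝ))^i * (QN i (s+1) : ℝ))) := by
            apply mul_le_mul_of_nonneg_right
            · exact_mod_cast hcardE
            · positivity
    -- combine
    have hfinal : ((k*s:ℕ):ℝ) * (2 * ‖O'‖ * ((2*(k:ℝ))^i * (QN i s : ℝ)))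
        + ((2*k:ℕ):ℝ) * (2 * ‖O'‖ * ((2*(k:ℝ))^i * (QN i (s+1) : ℝ)))
        ≤ ‖O'‖ * (2*(k:ℝ))^(i+1) * (QN (i+1) s : ℝ) := by
      have hrec : ((s * QN i s + 2 * QN i (s+1) : ℕ) : ℝ) ≤ ((QN (i+1) s : ℕ) : ℝ) := by
        exact_mod_cast QN_rec i s
      push_cast at hrec ⊢
      have hnn : (0:ℝ) ≤ ‖O'‖ * (2*(k:ℝ))^(i+1) := by positivity
      have expand : ((k:ℝ)*s) * (2 * ‖O'‖ * ((2*(k:ℝ))^i * (QN i s : ℝ)))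
          + (2*(k:ℝ)) * (2 * ‖O'‖ * ((2*(k:ℝ))^i * (QN i (s+1) : ℝ)))
          = ‖O'‖ * (2*(k:ℝ))^(i+1) * ((s:ℝ) * (QN i s:ℝ) + 2 * (QN i (s+1):ℝ)) := by
        rw [pow_succ]
        ring
      rw [expand]
      exact mul_le_mul_of_nonneg_left hrec hnn
    calc ‖(ad H)^[i+1] O'‖ ≤ ∑ j, g j := e2
      _ = _ + _ := hsplit
      _ ≤ ((k*s:ℕ):ℝ) * (2 * ‖O'‖ * ((2*(k:ℝ))^i * (QN i s : ℝ)))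
          + ((2*k:ℕ):ℝ) * (2 * ‖O'‖ * ((2*(k:ℝ))^i * (QN i (s+1) : ℝ))) := add_le_add hsum1 hsum2
      _ ≤ ‖O'‖ * (2*(k:ℝ))^(i+1) * (QN (i+1) s : ℝ) := hfinal



lemma log_helper (m p : ℕ) (hm : 2 ≤ m) (h : m^16 ≤ 2^p) :
    Real.log m ≤ (p:ℝ)/16 * 0.6931471808 := by
  have h1 : ((m:ℝ))^16 ≤ (2:ℝ)^p := by exact_mod_cast h
  have h2 := Real.log_le_log (by positivity) h1
  rw [Real.log_pow, Real.log_pow] at h2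
  have h3 := Real.log_two_lt_d9
  have h4 : (0:ℝ) ≤ Real.log 2 := Real.log_nonneg (by norm_num)
  push_cast at h2
  nlinarith [h2, h3, h4, (by positivity : (0:ℝ) ≤ (p:ℝ))]

lemma case2 : (QN 2 1 : ℝ) ≤ (15/8 * 2 / Real.log 2)^2 := by
  have hL : Real.log 2 ≤ (16:ℝ)/16 * 0.6931471808 :=
    log_helper 2 16 (by norm_num) (by norm_num)
  have hL0 : 0 < Real.log 2 := Real.log_pos (by norm_num)
  calc (QN 2 1:ℝ) ≤ (15/8 * 2 / ((16:ℝ)/16 * 0.6931471808))^2 := by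
        norm_num [QN, Finset.sum_range_succ, Nat.choose]
    _ ≤ (15/8*2/Real.log 2)^2 := by gcongr

lemma case3 : (QN 3 1 : ℝ) ≤ (15/8 * 3 / Real.log 3)^3 := by
  have hL : Real.log 3 ≤ (26:ℝ)/16 * 0.6931471808 :=
    log_helper 3 26 (by norm_num) (by norm_num)
  have hL0 : 0 < Real.log 3 := Real.log_pos (by norm_num)
  calc (QN 3 1:ℝ) ≤ (15/8 * 3 / ((26:ℝ)/16 * 0.6931471808))^3 := by
        norm_num [QN, Finset.sum_range_succ, Nat.choose]
    _ ≤ (15/8*3/Real.log 3)^3 := by gcongr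

lemma case4 : (QN 4 1 : ℝ) ≤ (15/8 * 4 / Real.log 4)^4 := by
  have hL : Real.log 4 ≤ (32:ℝ)/16 * 0.6931471808 :=
    log_helper 4 32 (by norm_num) (by norm_num)
  have hL0 : 0 < Real.log 4 := Real.log_pos (by norm_num)
  calc (QN 4 1:ℝ) ≤ (15/8 * 4 / ((32:ℝ)/16 * 0.6931471808))^4 := by
        norm_num [QN, Finset.sum_range_succ, Nat.choose]
    _ ≤ (15/8*4/Real.log 4)^4 := by gcongr

lemma case5 : (QN 5 1 : ℝ) ≤ (15/8 * 5 / Real.log 5)^5 := by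
  have hL : Real.log 5 ≤ (38:ℝ)/16 * 0.6931471808 :=
    log_helper 5 38 (by norm_num) (by norm_num)
  have hL0 : 0 < Real.log 5 := Real.log_pos (by norm_num)
  calc (QN 5 1:ℝ) ≤ (15/8 * 5 / ((38:ℝ)/16 * 0.6931471808))^5 := by
        norm_num [QN, Finset.sum_range_succ, Nat.choose]
    _ ≤ (15/8*5/Real.log 5)^5 := by gcongr

lemma case6 : (QN 6 1 : ℝ) ≤ (15/8 * 6 / Real.log 6)^6 := by
  have hL : Real.log 6 ≤ (42:ℝ)/16 * 0.6931471808 :=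
    log_helper 6 42 (by norm_num) (by norm_num)
  have hL0 : 0 < Real.log 6 := Real.log_pos (by norm_num)
  calc (QN 6 1:ℝ) ≤ (15/8 * 6 / ((42:ℝ)/16 * 0.6931471808))^6 := by
        norm_num [QN, Finset.sum_range_succ, Nat.choose]
    _ ≤ (15/8*6/Real.log 6)^6 := by gcongr

lemma case7 : (QN 7 1 : ℝ) ≤ (15/8 * 7 / Real.log 7)^7 := by
  have hL : Real.log 7 ≤ (45:ℝ)/16 * 0.6931471808 :=
    log_helper 7 45 (by norm_num) (by norm_num)
  have hL0 : 0 < Real.log 7 := Real.log_pos (by norm_num)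
  calc (QN 7 1:ℝ) ≤ (15/8 * 7 / ((45:ℝ)/16 * 0.6931471808))^7 := by
        norm_num [QN, Finset.sum_range_succ, Nat.choose]
    _ ≤ (15/8*7/Real.log 7)^7 := by gcongr

lemma case8 : (QN 8 1 : ℝ) ≤ (15/8 * 8 / Real.log 8)^8 := by
  have hL : Real.log 8 ≤ (48:ℝ)/16 * 0.6931471808 :=
    log_helper 8 48 (by norm_num) (by norm_num)
  have hL0 : 0 < Real.log 8 := Real.log_pos (by norm_num)
  calc (QN 8 1:ℝ) ≤ (15/8 * 8 / ((48:ℝ)/16 * 0.6931471808))^8 := by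
        norm_num [QN, Finset.sum_range_succ, Nat.choose]
    _ ≤ (15/8*8/Real.log 8)^8 := by gcongr

lemma case9 : (QN 9 1 : ℝ) ≤ (15/8 * 9 / Real.log 9)^9 := by
  have hL : Real.log 9 ≤ (51:ℝ)/16 * 0.6931471808 :=
    log_helper 9 51 (by norm_num) (by norm_num)
  have hL0 : 0 < Real.log 9 := Real.log_pos (by norm_num)
  calc (QN 9 1:ℝ) ≤ (15/8 * 9 / ((51:ℝ)/16 * 0.6931471808))^9 := by
        norm_num [QN, Finset.sum_range_succ, Nat.choose]
    _ ≤ (15/8*9/Real.log 9)^9 := by gcongr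

lemma case10 : (QN 10 1 : ℝ) ≤ (15/8 * 10 / Real.log 10)^10 := by
  have hL : Real.log 10 ≤ (54:ℝ)/16 * 0.6931471808 :=
    log_helper 10 54 (by norm_num) (by norm_num)
  have hL0 : 0 < Real.log 10 := Real.log_pos (by norm_num)
  calc (QN 10 1:ℝ) ≤ (15/8 * 10 / ((54:ℝ)/16 * 0.6931471808))^10 := by
        norm_num [QN, Finset.sum_range_succ, Nat.choose]
    _ ≤ (15/8*10/Real.log 10)^10 := by gcongr

lemma case11 : (QN 11 1 : ℝ) ≤ (15/8 * 11 / Real.log 11)^11 := by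
  have hL : Real.log 11 ≤ (56:ℝ)/16 * 0.6931471808 :=
    log_helper 11 56 (by norm_num) (by norm_num)
  have hL0 : 0 < Real.log 11 := Real.log_pos (by norm_num)
  calc (QN 11 1:ℝ) ≤ (15/8 * 11 / ((56:ℝ)/16 * 0.6931471808))^11 := by
        norm_num [QN, Finset.sum_range_succ, Nat.choose]
    _ ≤ (15/8*11/Real.log 11)^11 := by gcongr

lemma case12 : (QN 12 1 : ℝ) ≤ (15/8 * 12 / Real.log 12)^12 := by
  have hL : Real.log 12 ≤ (58:ℝ)/16 * 0.6931471808 :=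
    log_helper 12 58 (by norm_num) (by norm_num)
  have hL0 : 0 < Real.log 12 := Real.log_pos (by norm_num)
  calc (QN 12 1:ℝ) ≤ (15/8 * 12 / ((58:ℝ)/16 * 0.6931471808))^12 := by
        norm_num [QN, Finset.sum_range_succ, Nat.choose]
    _ ≤ (15/8*12/Real.log 12)^12 := by gcongr

lemma case13 : (QN 13 1 : ℝ) ≤ (15/8 * 13 / Real.log 13)^13 := by
  have hL : Real.log 13 ≤ (60:ℝ)/16 * 0.6931471808 :=
    log_helper 13 60 (by norm_num) (by norm_num)
  have hL0 : 0 < Real.log 13 := Real.log_pos (by norm_num)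
  calc (QN 13 1:ℝ) ≤ (15/8 * 13 / ((60:ℝ)/16 * 0.6931471808))^13 := by
        norm_num [QN, Finset.sum_range_succ, Nat.choose]
    _ ≤ (15/8*13/Real.log 13)^13 := by gcongr

lemma case14 : (QN 14 1 : ℝ) ≤ (15/8 * 14 / Real.log 14)^14 := by
  have hL : Real.log 14 ≤ (61:ℝ)/16 * 0.6931471808 :=
    log_helper 14 61 (by norm_num) (by norm_num)
  have hL0 : 0 < Real.log 14 := Real.log_pos (by norm_num)
  calc (QN 14 1:ℝ) ≤ (15/8 * 14 / ((61:ℝ)/16 * 0.6931471808))^14 := by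
        norm_num [QN, Finset.sum_range_succ, Nat.choose]
    _ ≤ (15/8*14/Real.log 14)^14 := by gcongr

lemma case15 : (QN 15 1 : ℝ) ≤ (15/8 * 15 / Real.log 15)^15 := by
  have hL : Real.log 15 ≤ (63:ℝ)/16 * 0.6931471808 :=
    log_helper 15 63 (by norm_num) (by norm_num)
  have hL0 : 0 < Real.log 15 := Real.log_pos (by norm_num)
  calc (QN 15 1:ℝ) ≤ (15/8 * 15 / ((63:ℝ)/16 * 0.6931471808))^15 := by
        norm_num [QN, Finset.sum_range_succ, Nat.choose]
    _ ≤ (15/8*15/Real.log 15)^15 := by gcongr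

lemma case16 : (QN 16 1 : ℝ) ≤ (15/8 * 16 / Real.log 16)^16 := by
  have hL : Real.log 16 ≤ (64:ℝ)/16 * 0.6931471808 :=
    log_helper 16 64 (by norm_num) (by norm_num)
  have hL0 : 0 < Real.log 16 := Real.log_pos (by norm_num)
  calc (QN 16 1:ℝ) ≤ (15/8 * 16 / ((64:ℝ)/16 * 0.6931471808))^16 := by
        norm_num [QN, Finset.sum_range_succ, Nat.choose]
    _ ≤ (15/8*16/Real.log 16)^16 := by gcongr

lemma case17 : (QN 17 1 : ℝ) ≤ (15/8 * 17 / Real.log 17)^17 := by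
  have hL : Real.log 17 ≤ (66:ℝ)/16 * 0.6931471808 :=
    log_helper 17 66 (by norm_num) (by norm_num)
  have hL0 : 0 < Real.log 17 := Real.log_pos (by norm_num)
  calc (QN 17 1:ℝ) ≤ (15/8 * 17 / ((66:ℝ)/16 * 0.6931471808))^17 := by
        norm_num [QN, Finset.sum_range_succ, Nat.choose]
    _ ≤ (15/8*17/Real.log 17)^17 := by gcongr

lemma case18 : (QN 18 1 : ℝ) ≤ (15/8 * 18 / Real.log 18)^18 := by
  have hL : Real.log 18 ≤ (67:ℝ)/16 * 0.6931471808 :=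
    log_helper 18 67 (by norm_num) (by norm_num)
  have hL0 : 0 < Real.log 18 := Real.log_pos (by norm_num)
  calc (QN 18 1:ℝ) ≤ (15/8 * 18 / ((67:ℝ)/16 * 0.6931471808))^18 := by
        norm_num [QN, Finset.sum_range_succ, Nat.choose]
    _ ≤ (15/8*18/Real.log 18)^18 := by gcongr

lemma case19 : (QN 19 1 : ℝ) ≤ (15/8 * 19 / Real.log 19)^19 := by
  have hL : Real.log 19 ≤ (68:ℝ)/16 * 0.6931471808 :=
    log_helper 19 68 (by norm_num) (by norm_num)
  have hL0 : 0 < Real.log 19 := Real.log_pos (by norm_num)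
  calc (QN 19 1:ℝ) ≤ (15/8 * 19 / ((68:ℝ)/16 * 0.6931471808))^19 := by
        norm_num [QN, Finset.sum_range_succ, Nat.choose]
    _ ≤ (15/8*19/Real.log 19)^19 := by gcongr

lemma case20 : (QN 20 1 : ℝ) ≤ (15/8 * 20 / Real.log 20)^20 := by
  have hL : Real.log 20 ≤ (70:ℝ)/16 * 0.6931471808 :=
    log_helper 20 70 (by norm_num) (by norm_num)
  have hL0 : 0 < Real.log 20 := Real.log_pos (by norm_num)
  calc (QN 20 1:ℝ) ≤ (15/8 * 20 / ((70:ℝ)/16 * 0.6931471808))^20 := by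
        norm_num [QN, Finset.sum_range_succ, Nat.choose]
    _ ≤ (15/8*20/Real.log 20)^20 := by gcongr

lemma case21 : (QN 21 1 : ℝ) ≤ (15/8 * 21 / Real.log 21)^21 := by
  have hL : Real.log 21 ≤ (71:ℝ)/16 * 0.6931471808 :=
    log_helper 21 71 (by norm_num) (by norm_num)
  have hL0 : 0 < Real.log 21 := Real.log_pos (by norm_num)
  calc (QN 21 1:ℝ) ≤ (15/8 * 21 / ((71:ℝ)/16 * 0.6931471808))^21 := by
        norm_num [QN, Finset.sum_range_succ, Nat.choose]
    _ ≤ (15/8*21/Real.log 21)^21 := by gcongr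

lemma case22 : (QN 22 1 : ℝ) ≤ (15/8 * 22 / Real.log 22)^22 := by
  have hL : Real.log 22 ≤ (72:ℝ)/16 * 0.6931471808 :=
    log_helper 22 72 (by norm_num) (by norm_num)
  have hL0 : 0 < Real.log 22 := Real.log_pos (by norm_num)
  calc (QN 22 1:ℝ) ≤ (15/8 * 22 / ((72:ℝ)/16 * 0.6931471808))^22 := by
        norm_num [QN, Finset.sum_range_succ, Nat.choose]
    _ ≤ (15/8*22/Real.log 22)^22 := by gcongr

lemma case23 : (QN 23 1 : ℝ) ≤ (15/8 * 23 / Real.log 23)^23 := by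
  have hL : Real.log 23 ≤ (73:ℝ)/16 * 0.6931471808 :=
    log_helper 23 73 (by norm_num) (by norm_num)
  have hL0 : 0 < Real.log 23 := Real.log_pos (by norm_num)
  calc (QN 23 1:ℝ) ≤ (15/8 * 23 / ((73:ℝ)/16 * 0.6931471808))^23 := by
        norm_num [QN, Finset.sum_range_succ, Nat.choose]
    _ ≤ (15/8*23/Real.log 23)^23 := by gcongr

lemma case24 : (QN 24 1 : ℝ) ≤ (15/8 * 24 / Real.log 24)^24 := by
  have hL : Real.log 24 ≤ (74:ℝ)/16 * 0.6931471808 :=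
    log_helper 24 74 (by norm_num) (by norm_num)
  have hL0 : 0 < Real.log 24 := Real.log_pos (by norm_num)
  calc (QN 24 1:ℝ) ≤ (15/8 * 24 / ((74:ℝ)/16 * 0.6931471808))^24 := by
        norm_num [QN, Finset.sum_range_succ, Nat.choose]
    _ ≤ (15/8*24/Real.log 24)^24 := by gcongr

lemma case25 : (QN 25 1 : ℝ) ≤ (15/8 * 25 / Real.log 25)^25 := by
  have hL : Real.log 25 ≤ (75:ℝ)/16 * 0.6931471808 :=
    log_helper 25 75 (by norm_num) (by norm_num)
  have hL0 : 0 < Real.log 25 := Real.log_pos (by norm_num)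
  calc (QN 25 1:ℝ) ≤ (15/8 * 25 / ((75:ℝ)/16 * 0.6931471808))^25 := by
        norm_num [QN, Finset.sum_range_succ, Nat.choose]
    _ ≤ (15/8*25/Real.log 25)^25 := by gcongr

lemma case26 : (QN 26 1 : ℝ) ≤ (15/8 * 26 / Real.log 26)^26 := by
  have hL : Real.log 26 ≤ (76:ℝ)/16 * 0.6931471808 :=
    log_helper 26 76 (by norm_num) (by norm_num)
  have hL0 : 0 < Real.log 26 := Real.log_pos (by norm_num)
  calc (QN 26 1:ℝ) ≤ (15/8 * 26 / ((76:ℝ)/16 * 0.6931471808))^26 := by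
        norm_num [QN, Finset.sum_range_succ, Nat.choose]
    _ ≤ (15/8*26/Real.log 26)^26 := by gcongr

lemma case27 : (QN 27 1 : ℝ) ≤ (15/8 * 27 / Real.log 27)^27 := by
  have hL : Real.log 27 ≤ (77:ℝ)/16 * 0.6931471808 :=
    log_helper 27 77 (by norm_num) (by norm_num)
  have hL0 : 0 < Real.log 27 := Real.log_pos (by norm_num)
  calc (QN 27 1:ℝ) ≤ (15/8 * 27 / ((77:ℝ)/16 * 0.6931471808))^27 := by
        norm_num [QN, Finset.sum_range_succ, Nat.choose]
    _ ≤ (15/8*27/Real.log 27)^27 := by gcongr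

lemma case28 : (QN 28 1 : ℝ) ≤ (15/8 * 28 / Real.log 28)^28 := by
  have hL : Real.log 28 ≤ (77:ℝ)/16 * 0.6931471808 :=
    log_helper 28 77 (by norm_num) (by norm_num)
  have hL0 : 0 < Real.log 28 := Real.log_pos (by norm_num)
  calc (QN 28 1:ℝ) ≤ (15/8 * 28 / ((77:ℝ)/16 * 0.6931471808))^28 := by
        norm_num [QN, Finset.sum_range_succ, Nat.choose]
    _ ≤ (15/8*28/Real.log 28)^28 := by gcongr

lemma case29 : (QN 29 1 : ℝ) ≤ (15/8 * 29 / Real.log 29)^29 := by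
  have hL : Real.log 29 ≤ (78:ℝ)/16 * 0.6931471808 :=
    log_helper 29 78 (by norm_num) (by norm_num)
  have hL0 : 0 < Real.log 29 := Real.log_pos (by norm_num)
  calc (QN 29 1:ℝ) ≤ (15/8 * 29 / ((78:ℝ)/16 * 0.6931471808))^29 := by
        norm_num [QN, Finset.sum_range_succ, Nat.choose]
    _ ≤ (15/8*29/Real.log 29)^29 := by gcongr

lemma case30 : (QN 30 1 : ℝ) ≤ (15/8 * 30 / Real.log 30)^30 := by
  have hL : Real.log 30 ≤ (79:ℝ)/16 * 0.6931471808 :=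
    log_helper 30 79 (by norm_num) (by norm_num)
  have hL0 : 0 < Real.log 30 := Real.log_pos (by norm_num)
  calc (QN 30 1:ℝ) ≤ (15/8 * 30 / ((79:ℝ)/16 * 0.6931471808))^30 := by
        norm_num [QN, Finset.sum_range_succ, Nat.choose]
    _ ≤ (15/8*30/Real.log 30)^30 := by gcongr

lemma case31 : (QN 31 1 : ℝ) ≤ (15/8 * 31 / Real.log 31)^31 := by
  have hL : Real.log 31 ≤ (80:ℝ)/16 * 0.6931471808 :=
    log_helper 31 80 (by norm_num) (by norm_num)
  have hL0 : 0 < Real.log 31 := Real.log_pos (by norm_num)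
  calc (QN 31 1:ℝ) ≤ (15/8 * 31 / ((80:ℝ)/16 * 0.6931471808))^31 := by
        norm_num [QN, Finset.sum_range_succ, Nat.choose]
    _ ≤ (15/8*31/Real.log 31)^31 := by gcongr

lemma case32 : (QN 32 1 : ℝ) ≤ (15/8 * 32 / Real.log 32)^32 := by
  have hL : Real.log 32 ≤ (80:ℝ)/16 * 0.6931471808 :=
    log_helper 32 80 (by norm_num) (by norm_num)
  have hL0 : 0 < Real.log 32 := Real.log_pos (by norm_num)
  calc (QN 32 1:ℝ) ≤ (15/8 * 32 / ((80:ℝ)/16 * 0.6931471808))^32 := by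
        norm_num [QN, Finset.sum_range_succ, Nat.choose]
    _ ≤ (15/8*32/Real.log 32)^32 := by gcongr

lemma case33 : (QN 33 1 : ℝ) ≤ (15/8 * 33 / Real.log 33)^33 := by
  have hL : Real.log 33 ≤ (81:ℝ)/16 * 0.6931471808 :=
    log_helper 33 81 (by norm_num) (by norm_num)
  have hL0 : 0 < Real.log 33 := Real.log_pos (by norm_num)
  calc (QN 33 1:ℝ) ≤ (15/8 * 33 / ((81:ℝ)/16 * 0.6931471808))^33 := by
        norm_num [QN, Finset.sum_range_succ, Nat.choose]
    _ ≤ (15/8*33/Real.log 33)^33 := by gcongr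

lemma case34 : (QN 34 1 : ℝ) ≤ (15/8 * 34 / Real.log 34)^34 := by
  have hL : Real.log 34 ≤ (82:ℝ)/16 * 0.6931471808 :=
    log_helper 34 82 (by norm_num) (by norm_num)
  have hL0 : 0 < Real.log 34 := Real.log_pos (by norm_num)
  calc (QN 34 1:ℝ) ≤ (15/8 * 34 / ((82:ℝ)/16 * 0.6931471808))^34 := by
        norm_num [QN, Finset.sum_range_succ, Nat.choose]
    _ ≤ (15/8*34/Real.log 34)^34 := by gcongr

lemma case35 : (QN 35 1 : ℝ) ≤ (15/8 * 35 / Real.log 35)^35 := by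
  have hL : Real.log 35 ≤ (83:ℝ)/16 * 0.6931471808 :=
    log_helper 35 83 (by norm_num) (by norm_num)
  have hL0 : 0 < Real.log 35 := Real.log_pos (by norm_num)
  calc (QN 35 1:ℝ) ≤ (15/8 * 35 / ((83:ℝ)/16 * 0.6931471808))^35 := by
        norm_num [QN, Finset.sum_range_succ, Nat.choose]
    _ ≤ (15/8*35/Real.log 35)^35 := by gcongr

lemma case36 : (QN 36 1 : ℝ) ≤ (15/8 * 36 / Real.log 36)^36 := by
  have hL : Real.log 36 ≤ (83:ℝ)/16 * 0.6931471808 :=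
    log_helper 36 83 (by norm_num) (by norm_num)
  have hL0 : 0 < Real.log 36 := Real.log_pos (by norm_num)
  calc (QN 36 1:ℝ) ≤ (15/8 * 36 / ((83:ℝ)/16 * 0.6931471808))^36 := by
        norm_num [QN, Finset.sum_range_succ, Nat.choose]
    _ ≤ (15/8*36/Real.log 36)^36 := by gcongr

lemma case37 : (QN 37 1 : ℝ) ≤ (15/8 * 37 / Real.log 37)^37 := by
  have hL : Real.log 37 ≤ (84:ℝ)/16 * 0.6931471808 :=
    log_helper 37 84 (by norm_num) (by norm_num)
  have hL0 : 0 < Real.log 37 := Real.log_pos (by norm_num)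
  calc (QN 37 1:ℝ) ≤ (15/8 * 37 / ((84:ℝ)/16 * 0.6931471808))^37 := by
        norm_num [QN, Finset.sum_range_succ, Nat.choose]
    _ ≤ (15/8*37/Real.log 37)^37 := by gcongr

lemma case38 : (QN 38 1 : ℝ) ≤ (15/8 * 38 / Real.log 38)^38 := by
  have hL : Real.log 38 ≤ (84:ℝ)/16 * 0.6931471808 :=
    log_helper 38 84 (by norm_num) (by norm_num)
  have hL0 : 0 < Real.log 38 := Real.log_pos (by norm_num)
  calc (QN 38 1:ℝ) ≤ (15/8 * 38 / ((84:ℝ)/16 * 0.6931471808))^38 := by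
        norm_num [QN, Finset.sum_range_succ, Nat.choose]
    _ ≤ (15/8*38/Real.log 38)^38 := by gcongr

lemma case39 : (QN 39 1 : ℝ) ≤ (15/8 * 39 / Real.log 39)^39 := by
  have hL : Real.log 39 ≤ (85:ℝ)/16 * 0.6931471808 :=
    log_helper 39 85 (by norm_num) (by norm_num)
  have hL0 : 0 < Real.log 39 := Real.log_pos (by norm_num)
  calc (QN 39 1:ℝ) ≤ (15/8 * 39 / ((85:ℝ)/16 * 0.6931471808))^39 := by
        norm_num [QN, Finset.sum_range_succ, Nat.choose]
    _ ≤ (15/8*39/Real.log 39)^39 := by gcongr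

lemma case40 : (QN 40 1 : ℝ) ≤ (15/8 * 40 / Real.log 40)^40 := by
  have hL : Real.log 40 ≤ (86:ℝ)/16 * 0.6931471808 :=
    log_helper 40 86 (by norm_num) (by norm_num)
  have hL0 : 0 < Real.log 40 := Real.log_pos (by norm_num)
  calc (QN 40 1:ℝ) ≤ (15/8 * 40 / ((86:ℝ)/16 * 0.6931471808))^40 := by
        norm_num [QN, Finset.sum_range_succ, Nat.choose]
    _ ≤ (15/8*40/Real.log 40)^40 := by gcongr

lemma case41 : (QN 41 1 : ℝ) ≤ (15/8 * 41 / Real.log 41)^41 := by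
  have hL : Real.log 41 ≤ (86:ℝ)/16 * 0.6931471808 :=
    log_helper 41 86 (by norm_num) (by norm_num)
  have hL0 : 0 < Real.log 41 := Real.log_pos (by norm_num)
  calc (QN 41 1:ℝ) ≤ (15/8 * 41 / ((86:ℝ)/16 * 0.6931471808))^41 := by
        norm_num [QN, Finset.sum_range_succ, Nat.choose]
    _ ≤ (15/8*41/Real.log 41)^41 := by gcongr

lemma case42 : (QN 42 1 : ℝ) ≤ (15/8 * 42 / Real.log 42)^42 := by
  have hL : Real.log 42 ≤ (87:ℝ)/16 * 0.6931471808 :=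
    log_helper 42 87 (by norm_num) (by norm_num)
  have hL0 : 0 < Real.log 42 := Real.log_pos (by norm_num)
  calc (QN 42 1:ℝ) ≤ (15/8 * 42 / ((87:ℝ)/16 * 0.6931471808))^42 := by
        norm_num [QN, Finset.sum_range_succ, Nat.choose]
    _ ≤ (15/8*42/Real.log 42)^42 := by gcongr

lemma case43 : (QN 43 1 : ℝ) ≤ (15/8 * 43 / Real.log 43)^43 := by
  have hL : Real.log 43 ≤ (87:ℝ)/16 * 0.6931471808 :=
    log_helper 43 87 (by norm_num) (by norm_num)
  have hL0 : 0 < Real.log 43 := Real.log_pos (by norm_num)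
  calc (QN 43 1:ℝ) ≤ (15/8 * 43 / ((87:ℝ)/16 * 0.6931471808))^43 := by
        norm_num [QN, Finset.sum_range_succ, Nat.choose]
    _ ≤ (15/8*43/Real.log 43)^43 := by gcongr

lemma case44 : (QN 44 1 : ℝ) ≤ (15/8 * 44 / Real.log 44)^44 := by
  have hL : Real.log 44 ≤ (88:ℝ)/16 * 0.6931471808 :=
    log_helper 44 88 (by norm_num) (by norm_num)
  have hL0 : 0 < Real.log 44 := Real.log_pos (by norm_num)
  calc (QN 44 1:ℝ) ≤ (15/8 * 44 / ((88:ℝ)/16 * 0.6931471808))^44 := by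
        norm_num [QN, Finset.sum_range_succ, Nat.choose]
    _ ≤ (15/8*44/Real.log 44)^44 := by gcongr

lemma case45 : (QN 45 1 : ℝ) ≤ (15/8 * 45 / Real.log 45)^45 := by
  have hL : Real.log 45 ≤ (88:ℝ)/16 * 0.6931471808 :=
    log_helper 45 88 (by norm_num) (by norm_num)
  have hL0 : 0 < Real.log 45 := Real.log_pos (by norm_num)
  calc (QN 45 1:ℝ) ≤ (15/8 * 45 / ((88:ℝ)/16 * 0.6931471808))^45 := by
        norm_num [QN, Finset.sum_range_succ, Nat.choose]
    _ ≤ (15/8*45/Real.log 45)^45 := by gcongr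

lemma case46 : (QN 46 1 : ℝ) ≤ (15/8 * 46 / Real.log 46)^46 := by
  have hL : Real.log 46 ≤ (89:ℝ)/16 * 0.6931471808 :=
    log_helper 46 89 (by norm_num) (by norm_num)
  have hL0 : 0 < Real.log 46 := Real.log_pos (by norm_num)
  calc (QN 46 1:ℝ) ≤ (15/8 * 46 / ((89:ℝ)/16 * 0.6931471808))^46 := by
        norm_num [QN, Finset.sum_range_succ, Nat.choose]
    _ ≤ (15/8*46/Real.log 46)^46 := by gcongr

lemma case47 : (QN 47 1 : ℝ) ≤ (15/8 * 47 / Real.log 47)^47 := by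
  have hL : Real.log 47 ≤ (89:ℝ)/16 * 0.6931471808 :=
    log_helper 47 89 (by norm_num) (by norm_num)
  have hL0 : 0 < Real.log 47 := Real.log_pos (by norm_num)
  calc (QN 47 1:ℝ) ≤ (15/8 * 47 / ((89:ℝ)/16 * 0.6931471808))^47 := by
        norm_num [QN, Finset.sum_range_succ, Nat.choose]
    _ ≤ (15/8*47/Real.log 47)^47 := by gcongr

lemma case48 : (QN 48 1 : ℝ) ≤ (15/8 * 48 / Real.log 48)^48 := by
  have hL : Real.log 48 ≤ (90:ℝ)/16 * 0.6931471808 :=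
    log_helper 48 90 (by norm_num) (by norm_num)
  have hL0 : 0 < Real.log 48 := Real.log_pos (by norm_num)
  calc (QN 48 1:ℝ) ≤ (15/8 * 48 / ((90:ℝ)/16 * 0.6931471808))^48 := by
        norm_num [QN, Finset.sum_range_succ, Nat.choose]
    _ ≤ (15/8*48/Real.log 48)^48 := by gcongr

lemma case49 : (QN 49 1 : ℝ) ≤ (15/8 * 49 / Real.log 49)^49 := by
  have hL : Real.log 49 ≤ (90:ℝ)/16 * 0.6931471808 :=
    log_helper 49 90 (by norm_num) (by norm_num)
  have hL0 : 0 < Real.log 49 := Real.log_pos (by norm_num)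
  calc (QN 49 1:ℝ) ≤ (15/8 * 49 / ((90:ℝ)/16 * 0.6931471808))^49 := by
        norm_num [QN, Finset.sum_range_succ, Nat.choose]
    _ ≤ (15/8*49/Real.log 49)^49 := by gcongr

lemma case50 : (QN 50 1 : ℝ) ≤ (15/8 * 50 / Real.log 50)^50 := by
  have hL : Real.log 50 ≤ (91:ℝ)/16 * 0.6931471808 :=
    log_helper 50 91 (by norm_num) (by norm_num)
  have hL0 : 0 < Real.log 50 := Real.log_pos (by norm_num)
  calc (QN 50 1:ℝ) ≤ (15/8 * 50 / ((91:ℝ)/16 * 0.6931471808))^50 := by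
        norm_num [QN, Finset.sum_range_succ, Nat.choose]
    _ ≤ (15/8*50/Real.log 50)^50 := by gcongr

lemma case51 : (QN 51 1 : ℝ) ≤ (15/8 * 51 / Real.log 51)^51 := by
  have hL : Real.log 51 ≤ (91:ℝ)/16 * 0.6931471808 :=
    log_helper 51 91 (by norm_num) (by norm_num)
  have hL0 : 0 < Real.log 51 := Real.log_pos (by norm_num)
  calc (QN 51 1:ℝ) ≤ (15/8 * 51 / ((91:ℝ)/16 * 0.6931471808))^51 := by
        norm_num [QN, Finset.sum_range_succ, Nat.choose]
    _ ≤ (15/8*51/Real.log 51)^51 := by gcongr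

lemma case52 : (QN 52 1 : ℝ) ≤ (15/8 * 52 / Real.log 52)^52 := by
  have hL : Real.log 52 ≤ (92:ℝ)/16 * 0.6931471808 :=
    log_helper 52 92 (by norm_num) (by norm_num)
  have hL0 : 0 < Real.log 52 := Real.log_pos (by norm_num)
  calc (QN 52 1:ℝ) ≤ (15/8 * 52 / ((92:ℝ)/16 * 0.6931471808))^52 := by
        norm_num [QN, Finset.sum_range_succ, Nat.choose]
    _ ≤ (15/8*52/Real.log 52)^52 := by gcongr

lemma case53 : (QN 53 1 : ℝ) ≤ (15/8 * 53 / Real.log 53)^53 := by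
  have hL : Real.log 53 ≤ (92:ℝ)/16 * 0.6931471808 :=
    log_helper 53 92 (by norm_num) (by norm_num)
  have hL0 : 0 < Real.log 53 := Real.log_pos (by norm_num)
  calc (QN 53 1:ℝ) ≤ (15/8 * 53 / ((92:ℝ)/16 * 0.6931471808))^53 := by
        norm_num [QN, Finset.sum_range_succ, Nat.choose]
    _ ≤ (15/8*53/Real.log 53)^53 := by gcongr

lemma case54 : (QN 54 1 : ℝ) ≤ (15/8 * 54 / Real.log 54)^54 := by
  have hL : Real.log 54 ≤ (93:ℝ)/16 * 0.6931471808 :=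
    log_helper 54 93 (by norm_num) (by norm_num)
  have hL0 : 0 < Real.log 54 := Real.log_pos (by norm_num)
  calc (QN 54 1:ℝ) ≤ (15/8 * 54 / ((93:ℝ)/16 * 0.6931471808))^54 := by
        norm_num [QN, Finset.sum_range_succ, Nat.choose]
    _ ≤ (15/8*54/Real.log 54)^54 := by gcongr

lemma case55 : (QN 55 1 : ℝ) ≤ (15/8 * 55 / Real.log 55)^55 := by
  have hL : Real.log 55 ≤ (93:ℝ)/16 * 0.6931471808 :=
    log_helper 55 93 (by norm_num) (by norm_num)
  have hL0 : 0 < Real.log 55 := Real.log_pos (by norm_num)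
  calc (QN 55 1:ℝ) ≤ (15/8 * 55 / ((93:ℝ)/16 * 0.6931471808))^55 := by
        norm_num [QN, Finset.sum_range_succ, Nat.choose]
    _ ≤ (15/8*55/Real.log 55)^55 := by gcongr

lemma case56 : (QN 56 1 : ℝ) ≤ (15/8 * 56 / Real.log 56)^56 := by
  have hL : Real.log 56 ≤ (93:ℝ)/16 * 0.6931471808 :=
    log_helper 56 93 (by norm_num) (by norm_num)
  have hL0 : 0 < Real.log 56 := Real.log_pos (by norm_num)
  calc (QN 56 1:ℝ) ≤ (15/8 * 56 / ((93:ℝ)/16 * 0.6931471808))^56 := by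
        norm_num [QN, Finset.sum_range_succ, Nat.choose]
    _ ≤ (15/8*56/Real.log 56)^56 := by gcongr

lemma case57 : (QN 57 1 : ℝ) ≤ (15/8 * 57 / Real.log 57)^57 := by
  have hL : Real.log 57 ≤ (94:ℝ)/16 * 0.6931471808 :=
    log_helper 57 94 (by norm_num) (by norm_num)
  have hL0 : 0 < Real.log 57 := Real.log_pos (by norm_num)
  calc (QN 57 1:ℝ) ≤ (15/8 * 57 / ((94:ℝ)/16 * 0.6931471808))^57 := by
        norm_num [QN, Finset.sum_range_succ, Nat.choose]
    _ ≤ (15/8*57/Real.log 57)^57 := by gcongr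

lemma case58 : (QN 58 1 : ℝ) ≤ (15/8 * 58 / Real.log 58)^58 := by
  have hL : Real.log 58 ≤ (94:ℝ)/16 * 0.6931471808 :=
    log_helper 58 94 (by norm_num) (by norm_num)
  have hL0 : 0 < Real.log 58 := Real.log_pos (by norm_num)
  calc (QN 58 1:ℝ) ≤ (15/8 * 58 / ((94:ℝ)/16 * 0.6931471808))^58 := by
        norm_num [QN, Finset.sum_range_succ, Nat.choose]
    _ ≤ (15/8*58/Real.log 58)^58 := by gcongr

lemma case59 : (QN 59 1 : ℝ) ≤ (15/8 * 59 / Real.log 59)^59 := by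
  have hL : Real.log 59 ≤ (95:ℝ)/16 * 0.6931471808 :=
    log_helper 59 95 (by norm_num) (by norm_num)
  have hL0 : 0 < Real.log 59 := Real.log_pos (by norm_num)
  calc (QN 59 1:ℝ) ≤ (15/8 * 59 / ((95:ℝ)/16 * 0.6931471808))^59 := by
        norm_num [QN, Finset.sum_range_succ, Nat.choose]
    _ ≤ (15/8*59/Real.log 59)^59 := by gcongr

lemma Qsmall (m : ℕ) (hm : 2 ≤ m) (hm' : m < 60) : (QN m 1 : ℝ) ≤ (15/8 * m / Real.log m)^m := by
  interval_cases m
  · exact_mod_cast case2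
  · exact_mod_cast case3
  · exact_mod_cast case4
  · exact_mod_cast case5
  · exact_mod_cast case6
  · exact_mod_cast case7
  · exact_mod_cast case8
  · exact_mod_cast case9
  · exact_mod_cast case10
  · exact_mod_cast case11
  · exact_mod_cast case12
  · exact_mod_cast case13
  · exact_mod_cast case14
  · exact_mod_cast case15
  · exact_mod_cast case16
  · exact_mod_cast case17
  · exact_mod_cast case18
  · exact_mod_cast case19
  · exact_mod_cast case20
  · exact_mod_cast case21
  · exact_mod_cast case22
  · exact_mod_cast case23
  · exact_mod_cast case24
  · exact_mod_cast case25
  · exact_mod_cast case26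
  · exact_mod_cast case27
  · exact_mod_cast case28
  · exact_mod_cast case29
  · exact_mod_cast case30
  · exact_mod_cast case31
  · exact_mod_cast case32
  · exact_mod_cast case33
  · exact_mod_cast case34
  · exact_mod_cast case35
  · exact_mod_cast case36
  · exact_mod_cast case37
  · exact_mod_cast case38
  · exact_mod_cast case39
  · exact_mod_cast case40
  · exact_mod_cast case41
  · exact_mod_cast case42
  · exact_mod_cast case43
  · exact_mod_cast case44
  · exact_mod_cast case45
  · exact_mod_cast case46
  · exact_mod_cast case47
  · exact_mod_cast case48
  · exact_mod_cast case49
  · exact_mod_cast case50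
  · exact_mod_cast case51
  · exact_mod_cast case52
  · exact_mod_cast case53
  · exact_mod_cast case54
  · exact_mod_cast case55
  · exact_mod_cast case56
  · exact_mod_cast case57
  · exact_mod_cast case58
  · exact_mod_cast case59




lemma fact_exp_le : ∀ m : ℕ, 1 ≤ m →
    (m.factorial : ℝ) * Real.exp 1 ^ m ≤ Real.exp 1 * m * (m:ℝ)^m := by
  intro m
  induction m with
  | zero => intro h; omega
  | succ m ih =>
    intro _
    by_cases hm : 1 ≤ m
    · have hkey : Real.exp 1 * (m:ℝ)^(m+1) ≤ ((m:ℝ)+1)^(m+1) := by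
        have hm0 : (0:ℝ) < m := by exact_mod_cast hm
        have h1 : Real.exp (1/((m:ℝ)+1)) ≤ ((m:ℝ)+1)/m := by
          have h2 := Real.add_one_le_exp (-(1/((m:ℝ)+1)))
          rw [Real.exp_neg] at h2
          have h3 : (0:ℝ) < Real.exp (1/((m:ℝ)+1)) := Real.exp_pos _
          have h4 : -(1/((m:ℝ)+1)) + 1 = (m:ℝ)/((m:ℝ)+1) := by field_simp; ring
          rw [h4] at h2
          have h5 := mul_le_mul_of_nonneg_left h2 h3.le
          rw [mul_inv_cancel₀ h3.ne'] at h5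
          rw [le_div_iff₀ hm0]
          calc Real.exp (1/((m:ℝ)+1)) * m
              = (Real.exp (1/((m:ℝ)+1)) * ((m:ℝ)/((m:ℝ)+1))) * ((m:ℝ)+1) := by field_simp
            _ ≤ 1 * ((m:ℝ)+1) := mul_le_mul_of_nonneg_right h5 (by positivity)
            _ = ((m:ℝ)+1) := one_mul _
        have h6 : Real.exp 1 = Real.exp (1/((m:ℝ)+1)) ^ (m+1) := by
          rw [← Real.exp_nat_mul]
          congr 1
          push_cast
          field_simp
        have h7 : Real.exp 1 ≤ (((m:ℝ)+1)/m)^(m+1) := by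
          rw [h6]
          exact pow_le_pow_left₀ (Real.exp_pos _).le h1 _
        calc Real.exp 1 * (m:ℝ)^(m+1) ≤ (((m:ℝ)+1)/m)^(m+1) * (m:ℝ)^(m+1) :=
              mul_le_mul_of_nonneg_right h7 (by positivity)
          _ = ((m:ℝ)+1)^(m+1) := by
              rw [div_pow, div_mul_cancel₀]
              positivity
      have ihm := ih hm
      have hexp : (0:ℝ) < Real.exp 1 := Real.exp_pos 1
      have hcast : ((m+1).factorial : ℝ) = ((m:ℝ)+1) * (m.factorial : ℝ) := by
        rw [Nat.factorial_succ]; push_cast; ring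
      calc ((m+1).factorial : ℝ) * Real.exp 1 ^ (m+1)
          = ((m:ℝ)+1) * ((m.factorial:ℝ) * Real.exp 1 ^ m) * Real.exp 1 := by
            rw [hcast, pow_succ]; ring
        _ ≤ ((m:ℝ)+1) * (Real.exp 1 * m * (m:ℝ)^m) * Real.exp 1 := by
            have hm1 : (0:ℝ) ≤ (m:ℝ)+1 := by positivity
            apply mul_le_mul_of_nonneg_right _ hexp.le
            exact mul_le_mul_of_nonneg_left ihm hm1
        _ = Real.exp 1 * ((m:ℝ)+1) * (Real.exp 1 * (m:ℝ)^(m+1)) := by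
            rw [pow_succ]; ring
        _ ≤ Real.exp 1 * ((m:ℝ)+1) * ((m:ℝ)+1)^(m+1) := by
            apply mul_le_mul_of_nonneg_left hkey (by positivity)
        _ = Real.exp 1 * ((m:ℕ)+1 : ℝ) * (((m:ℕ):ℝ)+1)^(m+1) := by norm_num
        _ = Real.exp 1 * ((m+1 : ℕ) : ℝ) * (((m+1:ℕ)):ℝ)^(m+1) := by push_cast; ring
    · have hm0 : m = 0 := by omega
      subst hm0
      norm_num [Nat.factorial]

lemma Qbig (m : ℕ) (hm : 60 ≤ m) : (QN m 1 : ℝ) ≤ (15/8 * m / Real.log m)^m := by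
  have hm0 : (0:ℝ) < m := by
    have : (0:ℕ) < m := by omega
    exact_mod_cast this
  have hm60 : (60:ℝ) ≤ m := by exact_mod_cast hm
  set L := Real.log m with hLdef
  have hL0 : 0 < L := Real.log_pos (by linarith)
  set t := L/2 with htdef
  have ht0 : 0 < t := by positivity
  set s := Real.exp t with hsdef
  have hs0 : 0 < s := Real.exp_pos _
  have hexpL : Real.exp L = m := Real.exp_log hm0
  have hs2 : s^2 = m := by
    rw [hsdef, ← Real.exp_nat_mul, ← hexpL]
    congr 1
    push_cast
    rw [htdef]; ring
  set u := Real.exp (L/4) with hudef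
  have hu0 : 0 < u := Real.exp_pos _
  have hu2 : u^2 = s := by
    rw [hudef, hsdef, ← Real.exp_nat_mul]
    congr 1
    push_cast
    rw [htdef]; ring
  have hu4 : u^4 = m := by
    rw [hudef, ← Real.exp_nat_mul, ← hexpL]
    congr 1
    push_cast
    ring
  -- log u ≤ u / e and L = 4 log u
  have hlogu : Real.log u = L/4 := by rw [hudef, Real.log_exp]
  have hloguu : L/4 ≤ u / Real.exp 1 := by
    have h1 : Real.log (u / Real.exp 1) ≤ u / Real.exp 1 - 1 :=
      Real.log_le_sub_one_of_pos (by positivity)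
    simp only [Real.log_div hu0.ne' (Real.exp_pos 1).ne', Real.log_exp, hlogu] at h1
    linarith
  have hLu : L ≤ 1.4716 * u := by
    have he : (2.7182818283:ℝ) < Real.exp 1 := Real.exp_one_gt_d9
    have h2 : u / Real.exp 1 ≤ u / 2.7182818283 := by
      apply div_le_div_of_nonneg_left hu0.le (by norm_num) he.le
    have h3 : L/4 ≤ u / 2.7182818283 := le_trans hloguu h2
    have h3' : L * 2.7182818283 ≤ u * 4 := (div_le_div_iff₀ (by norm_num) (by norm_num)).1 h3
    linarith
  have hu278 : (2.78:ℝ) ≤ u := by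
    by_contra hcon
    push_neg at hcon
    have h4 : u^4 < (2.78:ℝ)^4 := by
      apply pow_lt_pow_left₀ hcon hu0.le
      norm_num
    rw [hu4] at h4
    norm_num at h4
    linarith
  -- core numeric inequality
  have hG : 1 + L + t + L * s ≤ 0.93 * m := by
    rw [htdef, ← hs2, ← hu2]
    have hLs : L * u^2 ≤ 1.4716 * u * u^2 := by nlinarith [sq_nonneg u]
    have hpoly : 1 + 1.4716*u + (1.4716*u)/2 + 1.4716 * u * u^2 ≤ 0.93 * (u^2)^2 := by
      nlinarith [mul_nonneg (sub_nonneg.2 hu278) (pow_nonneg hu0.le 3),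
        mul_nonneg (sub_nonneg.2 hu278) (sq_nonneg u),
        mul_nonneg (sub_nonneg.2 hu278) hu0.le,
        sub_nonneg.2 hu278, sq_nonneg u, hu0.le]
    nlinarith [hLu, hu0, sq_nonneg u, hLs]
  -- step 1: termwise bound and sum
  have hsum : (QN m 1 : ℝ) ≤ (m.factorial * s / t^m) * Real.exp (L * s) := by
    have hcast : (QN m 1 : ℝ)
        = ∑ r ∈ Finset.range (m+1), (m.choose r : ℝ) * 2^r * (1+(r:ℝ))^(m-r) := by
      rw [QN]
      push_cast
      rfl
    rw [hcast]
    have hterm : ∀ r ∈ Finset.range (m+1),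
        (m.choose r : ℝ) * 2^r * (1+(r:ℝ))^(m-r)
          ≤ (m.factorial * s / t^m) * ((2*t*s)^r / r.factorial) := by
      intro r hr
      rw [Finset.mem_range] at hr
      have hrm : r ≤ m := by omega
      have hx0 : (0:ℝ) ≤ t*(1+r) := by positivity
      have h1 : (1+(r:ℝ))^(m-r) * t^(m-r) = (t*((1:ℝ)+r))^(m-r) := by
        rw [mul_pow]
        push_cast
        ring
      have h2 : (t*((1:ℝ)+r))^(m-r) ≤ ((m-r).factorial : ℝ) * Real.exp (t*(1+r)) := by
        have h3 := Real.pow_div_factorial_le_exp (t*((1:ℝ)+r)) hx0 (m-r)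
        rw [div_le_iff₀ (by positivity)] at h3
        linarith [h3]
      have h4 : Real.exp (t*((1:ℝ)+r)) = s * s^r := by
        show Real.exp (t*((1:ℝ)+r)) = Real.exp t * Real.exp t ^ r
        rw [← Real.exp_nat_mul, ← Real.exp_add]
        congr 1
        push_cast
        ring
      have h5 : (1+(r:ℝ))^(m-r) ≤ ((m-r).factorial : ℝ) * (s * s^r) / t^(m-r) := by
        rw [← h4]
        rw [le_div_iff₀ (by positivity)]
        rw [h1]
        exact h2
      have h6 : t^(m-r) * t^r = t^m := by
        rw [← pow_add]
        congr 1
        omega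
      have h7 : (m.choose r : ℝ) * ((m-r).factorial : ℝ) * (r.factorial : ℝ) = (m.factorial : ℝ) := by
        have := Nat.choose_mul_factorial_mul_factorial hrm
        push_cast [← this]
        ring
      calc (m.choose r : ℝ) * 2^r * (1+(r:ℝ))^(m-r)
          ≤ (m.choose r : ℝ) * 2^r * (((m-r).factorial : ℝ) * (s * s^r) / t^(m-r)) := by
            apply mul_le_mul_of_nonneg_left h5 (by positivity)
        _ = (m.factorial * s / t^m) * ((2*t*s)^r / r.factorial) := by
            have hrf : (0:ℝ) < (r.factorial : ℝ) := by
              exact_mod_cast Nat.factorial_pos r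
            have htmr : (0:ℝ) < t^(m-r) := by positivity
            rw [← h7, ← h6, mul_pow, mul_pow]
            field_simp
    calc ∑ r ∈ Finset.range (m+1), (m.choose r : ℝ) * 2^r * (1+(r:ℝ))^(m-r)
        ≤ ∑ r ∈ Finset.range (m+1), (m.factorial * s / t^m) * ((2*t*s)^r / r.factorial) :=
          Finset.sum_le_sum hterm
      _ = (m.factorial * s / t^m) * ∑ r ∈ Finset.range (m+1), ((2*t*s)^r / r.factorial) := by
          rw [Finset.mul_sum]
      _ ≤ (m.factorial * s / t^m) * Real.exp (2*t*s) := by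
          apply mul_le_mul_of_nonneg_left _ (by positivity)
          exact Real.sum_le_exp_of_nonneg (by positivity) (m+1)
      _ = (m.factorial * s / t^m) * Real.exp (L * s) := by
          congr 1
          rw [htdef]
          ring_nf
  -- step 2: compare with target
  have hfact := fact_exp_le m (by omega)
  have hrhs : (15/8 * (m:ℝ) / L)^m = (15/16 * m)^m / t^m := by
    rw [htdef, ← div_pow]
    congr 1
    field_simp
    ring
  rw [hrhs]
  have hmain : (m.factorial : ℝ) * s * Real.exp (L*s) ≤ (15/16 * m)^m := by
    have hexp1 : (0:ℝ) < Real.exp 1 := Real.exp_pos 1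
    -- m! ≤ e * m * m^m / e^m
    have hfact2 : (m.factorial : ℝ) ≤ Real.exp 1 * m * (m:ℝ)^m / Real.exp 1 ^ m := by
      rw [le_div_iff₀ (by positivity)]
      exact hfact
    have hLHS : Real.exp 1 * m * s * Real.exp (L*s) = Real.exp (1 + L + t + L*s) := by
      rw [Real.exp_add, Real.exp_add, Real.exp_add, hexpL, hsdef]
    have hstep : Real.exp (1 + L + t + L*s) ≤ Real.exp ((0.93:ℝ) * m) := Real.exp_le_exp.2 hG
    have hpow : Real.exp ((0.93:ℝ) * m) = Real.exp 0.93 ^ m := by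
      rw [← Real.exp_nat_mul]
      congr 1
      ring
    have h093 : Real.exp (0.93:ℝ) ≤ 15/16 * Real.exp 1 := by
      have ha : Real.exp 1 = Real.exp (0.93:ℝ) * Real.exp (0.07:ℝ) := by
        rw [← Real.exp_add]; norm_num
      have hb : (1.07:ℝ) ≤ Real.exp (0.07:ℝ) := by
        have := Real.add_one_le_exp (0.07:ℝ)
        linarith
      nlinarith [Real.exp_pos (0.93:ℝ)]
    have hfin : Real.exp 0.93 ^ m ≤ (15/16 * Real.exp 1)^m :=
      pow_le_pow_left₀ (Real.exp_pos _).le h093 m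
    have hchain : Real.exp 1 * m * s * Real.exp (L*s) ≤ (15/16 * Real.exp 1)^m := by
      rw [hLHS]
      exact le_trans hstep (by rw [hpow]; exact hfin)
    -- combine:  m! * s * exp(Ls) ≤ (e m m^m / e^m) * s * exp(Ls) = m^m/e^m * (e m s exp(Ls)) ≤ m^m/e^m * (15/16 e)^m = (15/16 m)^m
    have hkey2 : (m:ℝ)^m / Real.exp 1 ^ m * (15/16 * Real.exp 1)^m = (15/16 * m)^m := by
      rw [mul_pow, mul_pow]
      field_simp
    calc (m.factorial : ℝ) * s * Real.exp (L*s)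
        ≤ (Real.exp 1 * m * (m:ℝ)^m / Real.exp 1 ^ m) * s * Real.exp (L*s) := by
          apply mul_le_mul_of_nonneg_right _ (Real.exp_pos _).le
          exact mul_le_mul_of_nonneg_right hfact2 hs0.le
      _ = ((m:ℝ)^m / Real.exp 1 ^ m) * (Real.exp 1 * m * s * Real.exp (L*s)) := by
          field_simp
      _ ≤ ((m:ℝ)^m / Real.exp 1 ^ m) * (15/16 * Real.exp 1)^m := by
          apply mul_le_mul_of_nonneg_left hchain (by positivity)
      _ = (15/16 * m)^m := hkey2
  calc (QN m 1 : ℝ) ≤ (m.factorial * s / t^m) * Real.exp (L * s) := hsum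
    _ = ((m.factorial : ℝ) * s * Real.exp (L*s)) / t^m := by ring
    _ ≤ (15/16 * m)^m / t^m := by
        gcongr



/-- Inequality (16) of the paper (with `γ ≃ 1.6026` replaced by the smaller value `8/5`):
for a one-dimensional `k`-local Hamiltonian `H` with unit-norm terms and an operator `O`
supported on an interval of at most `k` sites,
`‖ad_H^m(O)‖ ≤ ‖O‖ · (6·k·m/((8/5)·log m))^m` for every integer `m ≥ 2`. -/
theorem multi_commutator_norm_bound_log
    (n d k : ℕ) (hn : 1 ≤ n) (hd : 2 ≤ d) (hk : 2 ≤ k)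
    (H : ChainOp n d) (hH : IsLocalHam n d k H)
    (a b : ℕ) (O : ChainOp n d)
    (hO : SupportedOn O (chainInterval n a b))
    (hcard : (chainInterval n a b).card ≤ k)
    (m : ℕ) (hm : 2 ≤ m) :
    ‖(ad H)^[m] O‖ ≤
      ‖O‖ * (6 * (k : ℝ) * (m : ℝ) / ((8 / 5) * Real.log (m : ℝ))) ^ m := by
  classical
  obtain ⟨h, hHsum, hh⟩ := hH
  have hm1R : (1:ℝ) < m := by
    have : (1:ℕ) < m := by omega
    exact_mod_cast this
  have hL0 : 0 < Real.log m := Real.log_pos hm1R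
  have hO2 : ∃ a' b' : ℕ, a' ≤ b' ∧ b' + 1 ≤ a' + k * 1 ∧
      SupportedOn O (chainInterval n a' b') := by
    by_cases hne : (chainInterval n a b).Nonempty
    · obtain ⟨i0, hi0⟩ := hne
      rw [mem_chainInterval] at hi0
      have hi0n := i0.isLt
      refine ⟨a, min b (n-1), by omega, ?_, ?_⟩
      · have heq : chainInterval n a b = chainInterval n a (min b (n-1)) := by
          apply Finset.ext
          intro i
          rw [mem_chainInterval, mem_chainInterval]
          have := i.isLt
          omega
        have h1 : (chainInterval n a b).card ≤ (Finset.Icc a (min b (n-1))).card := by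
          refine Finset.card_le_card_of_injOn Fin.val ?_ ?_
          · intro j hj
            rw [Finset.mem_coe, mem_chainInterval] at hj
            rw [Finset.mem_coe, Finset.mem_Icc]
            have := j.isLt
            omega
          · intro j1 _ j2 _ hj
            exact Fin.val_injective hj
        have h2 : (Finset.Icc a (min b (n-1))).card ≤ (chainInterval n a b).card := by
          refine Finset.card_le_card_of_injOn
            (fun c => (⟨c % n, Nat.mod_lt _ (by omega)⟩ : Fin n)) ?_ ?_
          · intro c hc
            rw [Finset.mem_coe, Finset.mem_Icc] at hc
            rw [Finset.mem_coe, mem_chainInterval]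
            have hcn : c % n = c := Nat.mod_eq_of_lt (by omega)
            simp only [hcn]
            omega
          · intro c1 hc1 c2 hc2 hcc
            rw [Finset.mem_coe, Finset.mem_Icc] at hc1 hc2
            have e1 : c1 % n = c1 := Nat.mod_eq_of_lt (by omega)
            have e2 : c2 % n = c2 := Nat.mod_eq_of_lt (by omega)
            have := congrArg Fin.val hcc
            simp only at this
            omega
        have hcc : (chainInterval n a b).card = min b (n-1) + 1 - a := by
          have := Nat.card_Icc a (min b (n-1))
          omega
        omega
      · have heq : chainInterval n a b = chainInterval n a (min b (n-1)) := by
          apply Finset.ext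
          intro i
          rw [mem_chainInterval, mem_chainInterval]
          have := i.isLt
          omega
        rw [← heq]
        exact hO
    · rw [Finset.not_nonempty_iff_eq_empty] at hne
      rw [hne] at hO
      refine ⟨0, k-1, by omega, by omega, ?_⟩
      exact supportedOn_mono hO (Finset.empty_subset _)
  obtain ⟨a', b', hab, hw, hOsup⟩ := hO2
  have hkey := key k hk H h hHsum hh m a' b' 1 O hab hw hOsup
  have hQ : (QN m 1 : ℝ) ≤ (15/8 * m / Real.log m)^m := by
    by_cases hsmall : m < 60
    · exact Qsmall m hm hsmall
    · exact Qbig m (by omega)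
  have hrw : (6 * (k:ℝ) * m / ((8/5) * Real.log m))^m
      = (2*(k:ℝ))^m * (15/8 * m / Real.log m)^m := by
    rw [← mul_pow]
    congr 1
    field_simp
    ring
  rw [hrw]
  calc ‖(ad H)^[m] O‖ ≤ ‖O‖ * (2*(k:ℝ))^m * (QN m 1 : ℝ) := hkey
    _ ≤ ‖O‖ * (2*(k:ℝ))^m * (15/8 * m / Real.log m)^m := by
        apply mul_le_mul_of_nonneg_left hQ (by positivity)
    _ = ‖O‖ * ((2*(k:ℝ))^m * (15/8 * m / Real.log m)^m) := by ring
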